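/- arXiv:2411.03793 — 3 statements merged into one kernel-verified Lean document; each statement's English description precedes it below -/
import Mathlib

section
/- Let $\beta\ge1$ and let $\Phi_\beta$ be the CDF of the $\beta$-Gaussian density $\varphi_\beta(y)=\frac{1}{2\beta^{1/\beta}\Gamma(1+1/\beta)}e^{-|y|^{\beta}/\beta}$. Then for all $t\in(0,\tfrac12)$, $\exp\big(\tfrac{1}{\beta}|\Phi_\beta^{-1}(t)|^{\beta}\big)\le \frac{1}{t}$. -/
/-- The generalized `β`-Gaussian probability density on `ℝ`. -/
noncomputable def phiBeta (β y : ℝ) : ℝ :=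
  1 / (2 * β ^ (1 / β) * Real.Gamma (1 + 1 / β)) * Real.exp (-|y| ^ β / β)

/-- The cumulative distribution function of the `β`-Gaussian distribution. -/
noncomputable def PhiBeta (β w : ℝ) : ℝ := ∫ y in Set.Iic w, phiBeta β y

open MeasureTheory Set Real
open scoped NNReal

lemma rpow_superadd {a b p : ℝ} (ha : 0 ≤ a) (hb : 0 ≤ b) (hp : 1 ≤ p) :
    a ^ p + b ^ p ≤ (a + b) ^ p := by
  have h := NNReal.add_rpow_le_rpow_add a.toNNReal b.toNNReal hp
  have h2 : ((a.toNNReal ^ p + b.toNNReal ^ p : ℝ≥0) : ℝ)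
      ≤ (((a.toNNReal + b.toNNReal) ^ p : ℝ≥0) : ℝ) := by exact_mod_cast h
  push_cast at h2
  rwa [Real.coe_toNNReal a ha, Real.coe_toNNReal b hb] at h2

lemma integrable_phiBeta {β : ℝ} (hβ : 1 ≤ β) : Integrable (phiBeta β) := by
  have hβpos : (0:ℝ) < β := lt_of_lt_of_le one_pos hβ
  set g : ℝ → ℝ := fun y => Real.exp (-(1/β) * |y| ^ β) with hg
  have hIoi : IntegrableOn g (Ioi 0) := by
    have h := integrableOn_rpow_mul_exp_neg_mul_rpow (s := 0) (p := β) (b := 1/β)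
      (by norm_num) hβpos (by positivity)
    refine (h.congr_fun (fun x hx => ?_) measurableSet_Ioi)
    simp [g, abs_of_pos (mem_Ioi.mp hx)]
  have hIic : IntegrableOn g (Iic 0) := by
    rw [← Measure.map_neg_eq_self (volume : Measure ℝ)]
    have m : MeasurableEmbedding fun x : ℝ => -x := (Homeomorph.neg ℝ).measurableEmbedding
    rw [m.integrableOn_map_iff]
    have : (g ∘ fun x : ℝ => -x) = g := by
      funext x; simp [g, Function.comp]
    rw [this]
    have : (fun x : ℝ => -x) ⁻¹' Iic 0 = Ici 0 := by
      ext x; simp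
    rw [this]
    exact Iff.mpr integrableOn_Ici_iff_integrableOn_Ioi hIoi
  have hgint : Integrable g := by
    have h := hIic.union hIoi
    rwa [Iic_union_Ioi, integrableOn_univ] at h
  have := hgint.const_mul (1 / (2 * β ^ (1 / β) * Real.Gamma (1 + 1 / β)))
  refine this.congr (Filter.Eventually.of_forall fun y => ?_)
  unfold phiBeta
  simp only [g]
  ring_nf

lemma PhiBeta_zero {β : ℝ} (hβ : 1 ≤ β) : PhiBeta β 0 = 1 / 2 := by
  have hβpos : (0:ℝ) < β := lt_of_lt_of_le one_pos hβ
  have hΓ : 0 < Real.Gamma (1 + 1 / β) := Real.Gamma_pos_of_pos (by positivity)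
  have hB : 0 < β ^ (1/β) := Real.rpow_pos_of_pos hβpos _
  have hI0 : (∫ y in Iic (0:ℝ), Real.exp (-(1/β) * |y| ^ β))
      = β ^ (1/β) * Real.Gamma (1 + 1/β) := by
    have h1 := integral_comp_neg_Iic (0:ℝ) (fun x => Real.exp (-(1/β) * |x| ^ β))
    simp only [abs_neg, neg_zero] at h1
    rw [h1, show (∫ x in Ioi (0:ℝ), Real.exp (-(1/β) * |x| ^ β))
        = ∫ x in Ioi (0:ℝ), Real.exp (-(1/β) * x ^ β) from
      setIntegral_congr_fun measurableSet_Ioi (fun x hx => by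
        rw [abs_of_pos (hx : (0:ℝ) < x)])]
    rw [integral_exp_neg_mul_rpow hβpos (by positivity)]
    congr 1
    · rw [one_div, Real.inv_rpow hβpos.le, ← Real.rpow_neg hβpos.le]
      congr 1; ring
    · rw [add_comm]
  unfold PhiBeta phiBeta
  rw [show (fun y : ℝ => 1 / (2 * β ^ (1 / β) * Real.Gamma (1 + 1 / β)) *
        Real.exp (-|y| ^ β / β))
      = fun y : ℝ => 1 / (2 * β ^ (1 / β) * Real.Gamma (1 + 1 / β)) *
        Real.exp (-(1/β) * |y| ^ β) from funext fun y => by ring_nf]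
  rw [integral_const_mul, hI0]
  field_simp

theorem stmt7 (β : ℝ) (hβ : 1 ≤ β) :
    ∀ t w : ℝ, 0 < t → t < 1 / 2 → PhiBeta β w = t →
      Real.exp (|w| ^ β / β) ≤ 1 / t := by
  intro t w ht ht2 heq
  have hβpos : (0:ℝ) < β := lt_of_lt_of_le one_pos hβ
  have hΓ : 0 < Real.Gamma (1 + 1 / β) := Real.Gamma_pos_of_pos (by positivity)
  have hB : 0 < β ^ (1/β) := Real.rpow_pos_of_pos hβpos _
  have hc : 0 < 1 / (2 * β ^ (1 / β) * Real.Gamma (1 + 1 / β)) := by positivity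
  have hnonneg : ∀ y, 0 ≤ phiBeta β y := fun y =>
    le_of_lt (mul_pos hc (Real.exp_pos _))
  have hf := integrable_phiBeta hβ
  rcases le_or_gt w 0 with hw | hw
  · -- main case w ≤ 0
    set A := |w| ^ β / β with hA
    have hA0 : 0 ≤ A := by positivity
    -- change of variables
    have emb : MeasurableEmbedding (fun x : ℝ => x + w) :=
      (Homeomorph.addRight w).measurableEmbedding
    have mp := (measurePreserving_add_right volume w).setIntegral_preimage_emb emb
      (phiBeta β) (Iic w)
    have hpre : (fun x : ℝ => x + w) ⁻¹' Iic w = Iic 0 := by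
      ext x; simp
    rw [hpre] at mp
    have hint1 : IntegrableOn (fun x => phiBeta β (x + w)) (Iic 0) :=
      (hf.comp_add_right w).integrableOn
    have hint2 : IntegrableOn (fun x => Real.exp (-A) * phiBeta β x) (Iic 0) :=
      hf.integrableOn.const_mul _
    have key : (∫ x in Iic (0:ℝ), phiBeta β (x + w))
        ≤ ∫ x in Iic (0:ℝ), Real.exp (-A) * phiBeta β x := by
      refine setIntegral_mono_on hint1 hint2 measurableSet_Iic fun x hx => ?_
      have hx0 : x ≤ 0 := hx
      have habs : |x + w| = |x| + |w| := by
        rw [abs_of_nonpos (add_nonpos hx0 hw), abs_of_nonpos hx0, abs_of_nonpos hw]; ring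
      have hsum : |x| ^ β + |w| ^ β ≤ |x + w| ^ β := by
        rw [habs]; exact rpow_superadd (abs_nonneg _) (abs_nonneg _) hβ
      unfold phiBeta
      rw [show Real.exp (-A) * (1 / (2 * β ^ (1 / β) * Real.Gamma (1 + 1 / β)) *
          Real.exp (-|x| ^ β / β))
        = 1 / (2 * β ^ (1 / β) * Real.Gamma (1 + 1 / β)) *
          (Real.exp (-A) * Real.exp (-|x| ^ β / β)) from by ring]
      refine mul_le_mul_of_nonneg_left ?_ hc.le
      rw [← Real.exp_add]
      refine Real.exp_le_exp.mpr ?_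
      rw [hA]
      calc -|x + w| ^ β / β ≤ -(|x| ^ β + |w| ^ β) / β := by
            apply div_le_div_of_nonneg_right (neg_le_neg hsum) hβpos.le
        _ = -(|w| ^ β / β) + -|x| ^ β / β := by ring
    have hwbound : t ≤ Real.exp (-A) * (1/2) := by
      have h0 : PhiBeta β w = ∫ x in Iic (0:ℝ), phiBeta β (x + w) := mp.symm
      have h1 : (∫ x in Iic (0:ℝ), Real.exp (-A) * phiBeta β x)
          = Real.exp (-A) * PhiBeta β 0 := integral_const_mul _ _
      rw [← heq, h0]
      calc (∫ x in Iic (0:ℝ), phiBeta β (x + w))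
          ≤ ∫ x in Iic (0:ℝ), Real.exp (-A) * phiBeta β x := key
        _ = Real.exp (-A) * PhiBeta β 0 := h1
        _ = Real.exp (-A) * (1/2) := by rw [PhiBeta_zero hβ]
    rw [le_div_iff₀ ht]
    have hexp : Real.exp A * Real.exp (-A) = 1 := by
      rw [← Real.exp_add]; simp
    calc Real.exp A * t ≤ Real.exp A * (Real.exp (-A) * (1/2)) := by
          exact mul_le_mul_of_nonneg_left hwbound (Real.exp_pos A).le
      _ = Real.exp A * Real.exp (-A) * (1/2) := by ring
      _ = 1/2 := by rw [hexp]; ring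
      _ ≤ 1 := by norm_num
  · -- w > 0 : contradiction with t < 1/2
    exfalso
    have hmono : PhiBeta β 0 ≤ PhiBeta β w := by
      refine setIntegral_mono_set hf.integrableOn
        (Filter.Eventually.of_forall hnonneg)
        (HasSubset.Subset.eventuallyLE (Iic_subset_Iic.mpr hw.le))
    rw [PhiBeta_zero hβ, heq] at hmono
    linarith
end

section
/- Let $\tau=\beta>0$, let $(\alpha_j)_{j\ge1}\in\ell^1(\mathbb N)$ with $\alpha_j\ge0$ and $\sup_j\alpha_j<\frac{1}{\beta}$, and let $\mu_\beta$ be the countable product of $\beta$-Gaussian measures with density $\varphi_\beta$. Then for every $q\in\big(0,\frac{1}{\beta\sup_j\alpha_j}\big)$, $\int \exp\big(q\sum_{j\ge1}\alpha_j|y_j|^{\beta}\big)\,\mu_\beta(dy)<\infty$. -/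
open MeasureTheory Set ENNReal Filter

/-- The `β`-Gaussian measure `𝒩_β(0,1)` on `ℝ`. -/
noncomputable def gaussBeta (β : ℝ) : Measure ℝ :=
  volume.withDensity fun y => ENNReal.ofReal (phiBeta β y)

/-- `μ` is the countable product `⨂_{j≥1} 𝒩_β(0,1)` on `ℝ^ℕ`: it is a probability
measure whose finite-dimensional cylinder probabilities factor as products of
one-dimensional `β`-Gaussian measures. -/
def IsProductBetaGaussian (β : ℝ) (μ : Measure (ℕ → ℝ)) : Prop :=
  IsProbabilityMeasure μ ∧
    ∀ (s : Finset ℕ) (A : ℕ → Set ℝ), (∀ i, MeasurableSet (A i)) →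
      μ {y : ℕ → ℝ | ∀ i ∈ s, y i ∈ A i} = ∏ i ∈ s, gaussBeta β (A i)

lemma lintegral_pi_prod_aux {n : ℕ} (m : Fin n → Measure ℝ) [∀ i, SigmaFinite (m i)]
    (f : Fin n → ℝ → ℝ≥0∞) (hf : ∀ i, Measurable (f i)) :
    ∫⁻ x : Fin n → ℝ, ∏ i, f i (x i) ∂Measure.pi m = ∏ i, ∫⁻ x, f i x ∂m i := by
  induction n with
  | zero => simp [Measure.pi_of_empty]
  | succ n ih =>
      have hmp := measurePreserving_piFinSuccAbove m 0
      have he := (MeasurableEquiv.piFinSuccAbove (fun _ : Fin (n+1) => ℝ) 0).measurableEmbedding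
      have key := hmp.lintegral_comp_emb he
        (fun z : ℝ × (Fin n → ℝ) => f 0 z.1 * ∏ j, f j.succ (z.2 j))
      have h1 : ∀ x : Fin (n+1) → ℝ,
          (f 0 ((MeasurableEquiv.piFinSuccAbove (fun _ : Fin (n+1) => ℝ) 0 x).1) *
            ∏ j, f j.succ ((MeasurableEquiv.piFinSuccAbove (fun _ : Fin (n+1) => ℝ) 0 x).2 j))
            = ∏ i, f i (x i) := by
        intro x
        rw [Fin.prod_univ_succ]
        congr 1
      simp_rw [h1] at key
      simp only [Fin.zero_succAbove] at key
      haveI : ∀ j : Fin n, SigmaFinite (m j.succ) := fun j => inferInstance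
      have hmeas : Measurable fun y : Fin n → ℝ => ∏ j, f j.succ (y j) :=
        Finset.measurable_prod Finset.univ fun j _ =>
          (hf j.succ).comp (measurable_pi_apply j)
      rw [key, lintegral_prod_mul (hf 0).aemeasurable hmeas.aemeasurable,
        ih (fun j => m j.succ) (fun j => f j.succ) (fun j => hf j.succ), Fin.prod_univ_succ]

lemma phiBeta_measurable (β : ℝ) : Measurable (phiBeta β) := by
  unfold phiBeta
  exact (measurable_const.mul ((((measurable_abs.pow_const _).neg).div_const _).exp))

lemma phiBeta_nonneg (β : ℝ) (hβ : 0 < β) (y : ℝ) : 0 ≤ phiBeta β y := by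
  unfold phiBeta
  have h1 : 0 < Real.Gamma (1 + 1/β) := Real.Gamma_pos_of_pos (by positivity)
  have h2 : 0 < (β:ℝ) ^ (1/β) := Real.rpow_pos_of_pos hβ _
  positivity

lemma gauss_exp_lintegral (β c : ℝ) (hβ : 0 < β) (hcb : β * c < 1)
    (hZ : gaussBeta β Set.univ = 1) :
    ∫⁻ y, ENNReal.ofReal (Real.exp (c * |y| ^ β)) ∂gaussBeta β
      = ENNReal.ofReal ((1 - β * c) ^ (-(1/β) : ℝ)) := by
  set t : ℝ := 1 - β * c with ht
  have htpos : 0 < t := by linarith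
  set s : ℝ := t ^ (-(1/β) : ℝ) with hs
  have hspos : 0 < s := Real.rpow_pos_of_pos htpos _
  have hfg : Measurable fun y : ℝ => ENNReal.ofReal (Real.exp (c * |y| ^ β)) :=
    (measurable_const.mul (measurable_abs.pow_const _)).exp.ennreal_ofReal
  have hφ : Measurable fun y : ℝ => ENNReal.ofReal (phiBeta β y) :=
    (phiBeta_measurable β).ennreal_ofReal
  have hpoint : ∀ y : ℝ, ENNReal.ofReal (phiBeta β y) * ENNReal.ofReal (Real.exp (c * |y| ^ β))
      = ENNReal.ofReal (phiBeta β (s⁻¹ * y)) := by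
    intro y
    rw [← ENNReal.ofReal_mul (phiBeta_nonneg β hβ y)]
    · congr 1
      unfold phiBeta
      rw [mul_assoc, ← Real.exp_add]
      congr 2
      have hsiv : s⁻¹ = t ^ (1/β : ℝ) := by rw [hs, ← Real.rpow_neg htpos.le, neg_neg]
      have habs : |s⁻¹ * y| ^ β = t * |y| ^ β := by
        rw [abs_mul, Real.mul_rpow (abs_nonneg _) (abs_nonneg _),
          abs_of_pos (inv_pos.mpr hspos), hsiv, ← Real.rpow_mul htpos.le,
          one_div, inv_mul_cancel₀ (ne_of_gt hβ), Real.rpow_one]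
      rw [habs]
      field_simp
      ring
  calc ∫⁻ y, ENNReal.ofReal (Real.exp (c * |y| ^ β)) ∂gaussBeta β
      = ∫⁻ y, ENNReal.ofReal (phiBeta β y) * ENNReal.ofReal (Real.exp (c * |y| ^ β)) ∂volume := by
        rw [gaussBeta, lintegral_withDensity_eq_lintegral_mul _ hφ hfg]; rfl
    _ = ∫⁻ y, ENNReal.ofReal (phiBeta β (s⁻¹ * y)) ∂volume := by simp_rw [hpoint]
    _ = ∫⁻ z, ENNReal.ofReal (phiBeta β z) ∂(Measure.map (fun y => s⁻¹ * y) volume) := by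
        rw [lintegral_map hφ (measurable_const_mul _)]
    _ = ENNReal.ofReal s * ∫⁻ z, ENNReal.ofReal (phiBeta β z) ∂volume := by
        rw [Real.map_volume_mul_left (inv_ne_zero (ne_of_gt hspos)), inv_inv,
          abs_of_pos hspos, lintegral_smul_measure, smul_eq_mul]
    _ = ENNReal.ofReal s := by
        have : ∫⁻ z, ENNReal.ofReal (phiBeta β z) ∂volume = gaussBeta β Set.univ := by
          rw [gaussBeta, withDensity_apply _ MeasurableSet.univ, Measure.restrict_univ]
        rw [this, hZ, mul_one]

lemma rpow_bound (β q a s0 : ℝ) (hβ : 0 < β) (hq : 0 < q) (ha : 0 ≤ a)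
    (hale : a ≤ s0) (hs : q * β * s0 < 1) :
    (1 - β * (q * a)) ^ (-(1/β) : ℝ) ≤ Real.exp (q / (1 - q * β * s0) * a) := by
  set r : ℝ := β * (q * a) with hr
  have hr0 : 0 ≤ r := by positivity
  have hrs : r ≤ q * β * s0 := by nlinarith [mul_nonneg (mul_nonneg hq.le hβ.le) (sub_nonneg.mpr hale)]
  have hr1 : r < 1 := lt_of_le_of_lt hrs hs
  have h1r : 0 < 1 - r := by linarith
  have h1s : 0 < 1 - q * β * s0 := by linarith
  rw [Real.rpow_def_of_pos h1r, Real.exp_le_exp]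
  have hlog : Real.log ((1 - r)⁻¹) ≤ (1 - r)⁻¹ - 1 :=
    Real.log_le_sub_one_of_pos (by positivity)
  have h2 : Real.log (1 - r) * -(1/β) = (1/β) * Real.log ((1 - r)⁻¹) := by
    rw [Real.log_inv]; ring
  rw [h2]
  have h3 : (1 - r)⁻¹ - 1 = r / (1 - r) := by field_simp; ring
  have h4 : r / (1 - r) ≤ r / (1 - q * β * s0) := by
    apply div_le_div_of_nonneg_left hr0 h1s (by linarith)
  have h5 : (1/β) * (r / (1 - q * β * s0)) = q / (1 - q * β * s0) * a := by
    rw [hr]; field_simp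
  calc (1/β) * Real.log ((1 - r)⁻¹) ≤ (1/β) * ((1 - r)⁻¹ - 1) := by
        apply mul_le_mul_of_nonneg_left hlog (by positivity)
    _ = (1/β) * (r / (1 - r)) := by rw [h3]
    _ ≤ (1/β) * (r / (1 - q * β * s0)) := mul_le_mul_of_nonneg_left h4 (by positivity)
    _ = q / (1 - q * β * s0) * a := h5

theorem stmt12 (β q : ℝ) (α : ℕ → ℝ)
    (hβ : 0 < β) (hα : ∀ j, 0 ≤ α j) (hsum : Summable α)
    (hαsup : (⨆ j, α j) < 1 / β)
    (hq : 0 < q) (hqbound : q * β * (⨆ j, α j) < 1)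
    (μ : Measure (ℕ → ℝ)) (hμ : IsProductBetaGaussian β μ) :
    ∫⁻ y in {y : ℕ → ℝ | Summable fun j => α j * |y j| ^ β},
        ENNReal.ofReal (Real.exp (q * ∑' j, α j * |y j| ^ β)) ∂μ < ⊤ := by
  classical
  obtain ⟨hprob, hcyl⟩ := hμ
  -- gaussBeta is a probability measure
  have hZ : gaussBeta β Set.univ = 1 := by
    have h := hcyl {0} (fun _ => Set.univ) (fun _ => MeasurableSet.univ)
    have h1 : {y : ℕ → ℝ | ∀ i ∈ ({0} : Finset ℕ), y i ∈ Set.univ} = Set.univ := by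
      ext y; simp
    rw [h1, hprob.measure_univ, Finset.prod_singleton] at h
    exact h.symm
  haveI : IsProbabilityMeasure (gaussBeta β) := ⟨hZ⟩
  -- sup of α
  set S : ℝ := ⨆ j, α j with hSdef
  have hbdd : BddAbove (Set.range α) := by
    refine ⟨∑' k, α k, ?_⟩
    rintro x ⟨j, rfl⟩
    exact hsum.le_tsum j fun k _ => hα k
  have haleS : ∀ j, α j ≤ S := fun j => le_ciSup hbdd j
  have hS0 : 0 ≤ S := le_trans (hα 0) (haleS 0)
  have h1s : 0 < 1 - q * β * S := by linarith
  set K : ℝ := q / (1 - q * β * S) with hK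
  have hK0 : 0 ≤ K := by positivity
  -- projections
  have hπ : ∀ n : ℕ, Measurable fun (y : ℕ → ℝ) (i : Fin n) => y ↑i :=
    fun n => measurable_pi_lambda _ fun i => measurable_pi_apply _
  have hmap : ∀ n : ℕ, Measure.map (fun (y : ℕ → ℝ) (i : Fin n) => y ↑i) μ
      = Measure.pi (fun _ : Fin n => gaussBeta β) := by
    intro n
    refine (Measure.pi_eq fun A hA => ?_).symm
    rw [Measure.map_apply (hπ n) (MeasurableSet.univ_pi hA)]
    set A' : ℕ → Set ℝ := fun j => if h : j < n then A ⟨j, h⟩ else Set.univ with hA'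
    have hpre : (fun (y : ℕ → ℝ) (i : Fin n) => y ↑i) ⁻¹' Set.pi Set.univ A
        = {y : ℕ → ℝ | ∀ j ∈ Finset.range n, y j ∈ A' j} := by
      ext y
      simp only [Set.mem_preimage, Set.mem_pi, Set.mem_univ, true_implies,
        Set.mem_setOf_eq, Finset.mem_range]
      constructor
      · intro h j hj
        simp only [hA', dif_pos hj]
        exact h ⟨j, hj⟩
      · intro h i
        have := h i.1 i.2
        simpa only [hA', dif_pos i.2, Fin.eta] using this
    rw [hpre, hcyl (Finset.range n) A'
      (fun j => by by_cases h : j < n <;> simp [hA', h, hA])]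
    rw [← Fin.prod_univ_eq_prod_range (fun j => gaussBeta β (A' j)) n]
    refine Finset.prod_congr rfl fun i _ => ?_
    simp only [hA', dif_pos i.2, Fin.eta]
  -- the one-coordinate factors
  set g : ℕ → ℝ → ℝ≥0∞ := fun j t => ENNReal.ofReal (Real.exp (q * α j * |t| ^ β)) with hg
  have hgmeas : ∀ j, Measurable (g j) := fun j =>
    (measurable_const.mul (measurable_abs.pow_const _)).exp.ennreal_ofReal
  have hone : ∀ j, ∫⁻ t, g j t ∂gaussBeta β
      = ENNReal.ofReal ((1 - β * (q * α j)) ^ (-(1/β) : ℝ)) := by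
    intro j
    have hbc : β * (q * α j) < 1 := by
      have h1 : q * β * α j ≤ q * β * S :=
        mul_le_mul_of_nonneg_left (haleS j) (by positivity)
      nlinarith
    have := gauss_exp_lintegral β (q * α j) hβ hbc hZ
    simpa [hg, mul_assoc] using this
  -- partial products and their integrals
  set G : ℕ → (ℕ → ℝ) → ℝ≥0∞ := fun n y => ∏ j ∈ Finset.range n, g j (y j) with hG
  have hGmeas : ∀ n, Measurable (G n) := fun n =>
    Finset.measurable_prod _ fun j _ => (hgmeas j).comp (measurable_pi_apply j)
  have hg1 : ∀ j t, 1 ≤ g j t := by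
    intro j t
    rw [hg]
    simp only
    rw [← ENNReal.ofReal_one]
    exact ENNReal.ofReal_le_ofReal (Real.one_le_exp
      (mul_nonneg (mul_nonneg hq.le (hα j)) (Real.rpow_nonneg (abs_nonneg _) _)))
  have hGmono : Monotone G := by
    intro n m hnm y
    exact Finset.prod_le_prod_of_subset_of_one_le'
      (Finset.range_subset_range.mpr hnm) (fun j _ _ => hg1 j (y j))
  set B : ℝ≥0∞ := ENNReal.ofReal (Real.exp (K * ∑' k, α k)) with hB
  have hint : ∀ n, ∫⁻ y, G n y ∂μ ≤ B := by
    intro n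
    calc ∫⁻ y, G n y ∂μ
        = ∫⁻ x : Fin n → ℝ, ∏ i : Fin n, g (↑i) (x i) ∂Measure.pi (fun _ : Fin n => gaussBeta β) := by
          have hfm : Measurable fun x : Fin n → ℝ => ∏ i : Fin n, g (↑i) (x i) :=
            Finset.measurable_prod _ fun i _ => (hgmeas ↑i).comp (measurable_pi_apply i)
          rw [← hmap n, lintegral_map hfm (hπ n)]
          refine lintegral_congr fun y => ?_
          rw [hG]
          exact (Fin.prod_univ_eq_prod_range (fun j => g j (y j)) n).symm
      _ = ∏ i : Fin n, ∫⁻ t, g ↑i t ∂gaussBeta β :=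
          lintegral_pi_prod_aux _ _ fun i => hgmeas ↑i
      _ ≤ ∏ i : Fin n, ENNReal.ofReal (Real.exp (K * α ↑i)) := by
          refine Finset.prod_le_prod' fun i _ => ?_
          rw [hone]
          exact ENNReal.ofReal_le_ofReal
            (rpow_bound β q (α ↑i) S hβ hq (hα _) (haleS _) hqbound)
      _ = ENNReal.ofReal (∏ i : Fin n, Real.exp (K * α ↑i)) :=
          (ENNReal.ofReal_prod_of_nonneg fun i _ => (Real.exp_pos _).le).symm
      _ ≤ B := by
          rw [hB, ← Real.exp_sum, ← Finset.mul_sum]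
          refine ENNReal.ofReal_le_ofReal (Real.exp_le_exp.mpr ?_)
          refine mul_le_mul_of_nonneg_left ?_ hK0
          rw [Fin.sum_univ_eq_sum_range (fun j => α j) n]
          exact Summable.sum_le_tsum (Finset.range n) (fun k _ => hα k) hsum
  -- pointwise limit on the summability set
  have hpoint : ∀ y ∈ {y : ℕ → ℝ | Summable fun j => α j * |y j| ^ β},
      ENNReal.ofReal (Real.exp (q * ∑' j, α j * |y j| ^ β)) ≤ ⨆ n, G n y := by
    intro y hy
    have hyS : Summable fun j => α j * |y j| ^ β := hy
    have hGn : ∀ n, G n y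
        = ENNReal.ofReal (Real.exp (q * ∑ j ∈ Finset.range n, α j * |y j| ^ β)) := by
      intro n
      rw [hG]
      simp only
      rw [Finset.mul_sum, Real.exp_sum,
        ENNReal.ofReal_prod_of_nonneg fun i _ => (Real.exp_pos _).le]
      exact Finset.prod_congr rfl fun j _ => by simp only [hg, mul_assoc]
    have h1 : Tendsto (fun n => ∑ j ∈ Finset.range n, α j * |y j| ^ β) atTop
        (nhds (∑' j, α j * |y j| ^ β)) := hyS.hasSum.tendsto_sum_nat
    have h2 : Tendsto (fun n => Real.exp (q * ∑ j ∈ Finset.range n, α j * |y j| ^ β)) atTop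
        (nhds (Real.exp (q * ∑' j, α j * |y j| ^ β))) :=
      (Real.continuous_exp.tendsto _).comp (h1.const_mul q)
    have h3 : Tendsto (fun n => G n y) atTop
        (nhds (ENNReal.ofReal (Real.exp (q * ∑' j, α j * |y j| ^ β)))) := by
      simp_rw [hGn]
      exact ENNReal.tendsto_ofReal h2
    have h4 : Tendsto (fun n => G n y) atTop (nhds (⨆ n, G n y)) :=
      tendsto_atTop_iSup fun n m h => hGmono h y
    exact le_of_eq (tendsto_nhds_unique h3 h4)
  calc ∫⁻ y in {y : ℕ → ℝ | Summable fun j => α j * |y j| ^ β},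
        ENNReal.ofReal (Real.exp (q * ∑' j, α j * |y j| ^ β)) ∂μ
      ≤ ∫⁻ y in {y : ℕ → ℝ | Summable fun j => α j * |y j| ^ β}, ⨆ n, G n y ∂μ :=
        setLIntegral_mono (Measurable.iSup hGmeas) hpoint
    _ ≤ ∫⁻ y, ⨆ n, G n y ∂μ := setLIntegral_le_lintegral _ _
    _ = ⨆ n, ∫⁻ y, G n y ∂μ := lintegral_iSup hGmeas hGmono
    _ ≤ B := iSup_le hint
    _ < ⊤ := ENNReal.ofReal_lt_top
end

section
/- For every finitely supported multi-index $\nu\in\mathbb N_0^{\mathbb N}$ and every real $\sigma\ge1$, $\sum_{m\le\nu}\binom{\nu}{m}(|m|!)^{\sigma}\le e^{\sigma}\,(|\nu|!)^{\sigma}$. -/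
open Finset

/-- `|ν|`: the order (modulus) of a finitely supported multi-index. -/
def msize (ν : ℕ →₀ ℕ) : ℕ := ν.sum fun _ n => n

/-- Multi-index binomial coefficient `∏_j C(ν_j, m_j)`. -/
def mchoose (ν m : ℕ →₀ ℕ) : ℕ := ∏ j ∈ ν.support, (ν j).choose (m j)

lemma msize_add (a b : ℕ →₀ ℕ) : msize (a + b) = msize a + msize b := by
  simp [msize, Finsupp.sum_add_index]

lemma msize_single (a k : ℕ) : msize (Finsupp.single a k) = k := by
  simp [msize, Finsupp.sum_single_index]

lemma msize_mono {m ν : ℕ →₀ ℕ} (h : m ≤ ν) : msize m ≤ msize ν := by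
  obtain ⟨c, rfl⟩ := le_iff_exists_add.mp h
  simp [msize_add]

lemma mchoose_step (a k : ℕ) (f : ℕ →₀ ℕ) (ha : a ∉ f.support) (hk : k ≠ 0)
    (j : ℕ) (m : ℕ →₀ ℕ) (hm : m ≤ f) :
    mchoose (Finsupp.single a k + f) (Finsupp.single a j + m) = k.choose j * mchoose f m := by
  have hfa : f a = 0 := Finsupp.notMem_support_iff.mp ha
  have hma : m a = 0 := Nat.le_zero.mp (hfa ▸ hm a)
  have hsupp : (Finsupp.single a k + f).support = insert a f.support := by
    rw [Finsupp.support_add_eq, Finsupp.support_single_ne_zero _ hk]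
    · ext; simp
    · rw [Finsupp.support_single_ne_zero _ hk]; simpa using ha
  rw [mchoose, hsupp, Finset.prod_insert ha]
  congr 1
  · simp [hfa, hma]
  · apply Finset.prod_congr rfl
    intro i hi
    have hia : i ≠ a := by rintro rfl; exact ha hi
    simp [Finsupp.single_apply, hia.symm]

lemma sum_Iic_step {M : Type*} [AddCommMonoid M] (a k : ℕ) (f : ℕ →₀ ℕ)
    (ha : a ∉ f.support) (g : (ℕ →₀ ℕ) → M) :
    ∑ m ∈ Finset.Iic (Finsupp.single a k + f), g m
      = ∑ p ∈ Finset.Iic k ×ˢ Finset.Iic f, g (Finsupp.single a p.1 + p.2) := by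
  have hfa : f a = 0 := Finsupp.notMem_support_iff.mp ha
  refine (Finset.sum_nbij' (fun (p : ℕ × (ℕ →₀ ℕ)) => Finsupp.single a p.1 + p.2)
    (fun (m : ℕ →₀ ℕ) => (m a, m.erase a)) ?_ ?_ ?_ ?_ ?_).symm
  · -- hi : p ∈ product → single a p.1 + p.2 ∈ Iic (single a k + f)
    intro p hp
    simp only [Finset.mem_Iic, Finset.mem_product] at hp ⊢
    intro i
    by_cases hia : i = a
    · subst hia
      have h2 : p.2 i ≤ f i := hp.2 i
      have h1 : p.1 ≤ k := hp.1
      simp only [Finsupp.add_apply, Finsupp.single_eq_same]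
      omega
    · simpa [Finsupp.single_apply, Ne.symm hia] using hp.2 i
  · -- hj : m ∈ Iic → (m a, erase a m) ∈ product
    intro m hm
    simp only [Finset.mem_Iic, Finset.mem_product] at hm ⊢
    constructor
    · have := hm a
      simpa [hfa] using this
    · intro i
      by_cases hia : i = a
      · simp [hia]
      · have := hm i
        simpa [Finsupp.erase_ne hia, Finsupp.single_apply, Ne.symm hia] using this
  · -- left_inv : ∀ p ∈ product, ((single a p.1 + p.2) a, erase a (single a p.1 + p.2)) = p
    intro p hp
    simp only [Finset.mem_Iic, Finset.mem_product] at hp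
    have hpa : p.2 a = 0 := Nat.le_zero.mp (hfa ▸ hp.2 a)
    have h1 : (Finsupp.single a p.1 + p.2) a = p.1 := by simp [hpa]
    have h2 : Finsupp.erase a (Finsupp.single a p.1 + p.2) = p.2 := by
      rw [Finsupp.erase_add, Finsupp.erase_single, zero_add]
      exact Finsupp.erase_of_notMem_support (by simp [hpa])
    show ((Finsupp.single a p.1 + p.2) a, Finsupp.erase a (Finsupp.single a p.1 + p.2)) = p
    rw [h1, h2]
  · -- right_inv : ∀ m ∈ Iic, single a (m a) + erase a m = m
    intro m _
    exact Finsupp.single_add_erase a m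
  · intro p _
    rfl

open Polynomial in
lemma key (ν : ℕ →₀ ℕ) :
    ∑ m ∈ Finset.Iic ν, (mchoose ν m : Polynomial ℕ) * X ^ msize m = (X + 1) ^ msize ν := by
  induction ν using Finsupp.induction with
  | zero =>
    have h0 : (Finset.Iic (0 : ℕ →₀ ℕ)) = {0} := by
      ext m; simp [le_zero_iff]
    simp [h0, mchoose, msize]
  | single_add a k f ha hk ih =>
    rw [sum_Iic_step a k f ha]
    have hc : ∀ p ∈ Finset.Iic k ×ˢ Finset.Iic f,
        (mchoose (Finsupp.single a k + f) (Finsupp.single a p.1 + p.2) : Polynomial ℕ)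
          * X ^ msize (Finsupp.single a p.1 + p.2)
        = ((k.choose p.1 : Polynomial ℕ) * X ^ p.1)
            * ((mchoose f p.2 : Polynomial ℕ) * X ^ msize p.2) := by
      intro p hp
      simp only [Finset.mem_Iic, Finset.mem_product] at hp
      rw [mchoose_step a k f ha hk p.1 p.2 hp.2, msize_add, msize_single]
      push_cast
      ring
    have hIic : Finset.Iic k = Finset.range (k + 1) := by ext x; simp [Nat.lt_succ_iff]
    have hbin : ((X : Polynomial ℕ) + 1) ^ k
        = ∑ j ∈ Finset.Iic k, (k.choose j : Polynomial ℕ) * X ^ j := by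
      rw [hIic, add_pow]
      apply Finset.sum_congr rfl
      intro i _
      ring
    rw [Finset.sum_congr rfl hc, msize_add, msize_single, pow_add, hbin, ← ih,
      Finset.sum_mul_sum, Finset.sum_product]

open Polynomial in
lemma fiber_eq (ν : ℕ →₀ ℕ) (ℓ : ℕ) :
    ∑ m ∈ (Finset.Iic ν).filter (fun m => msize m = ℓ), mchoose ν m
      = (msize ν).choose ℓ := by
  have h := congrArg (fun p => coeff p ℓ) (key ν)
  simp only [finset_sum_coeff, coeff_X_add_one_pow, Nat.cast_id] at h
  rw [← h, Finset.sum_filter]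
  apply Finset.sum_congr rfl
  intro m _
  rw [← Polynomial.C_eq_natCast, coeff_C_mul, coeff_X_pow]
  rcases eq_or_ne (msize m) ℓ with hm | hm
  · simp [hm]
  · simp [hm, Ne.symm hm]

theorem stmt14 (ν : ℕ →₀ ℕ) (σ : ℝ) (hσ : 1 ≤ σ) :
    ∑ m ∈ Finset.Iic ν, (mchoose ν m : ℝ) * ((msize m).factorial : ℝ) ^ σ
      ≤ Real.exp 1 ^ σ * ((msize ν).factorial : ℝ) ^ σ := by
  set n := msize ν with hn
  have hfn : (0:ℝ) < (n.factorial : ℝ) := by positivity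
  have step1 : ∑ m ∈ Finset.Iic ν, (mchoose ν m : ℝ) * ((msize m).factorial : ℝ) ^ σ
      ≤ ((n.factorial : ℝ)) ^ (σ - 1)
          * ∑ m ∈ Finset.Iic ν, (mchoose ν m : ℝ) * (msize m).factorial := by
    rw [Finset.mul_sum]
    apply Finset.sum_le_sum
    intro m hm
    have hle : msize m ≤ n := msize_mono (Finset.mem_Iic.mp hm)
    have h0 : (0:ℝ) < ((msize m).factorial : ℝ) := by positivity
    have h2 : ((msize m).factorial : ℝ) ≤ (n.factorial : ℝ) := by
      exact_mod_cast Nat.factorial_le hle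
    have hkey : ((msize m).factorial : ℝ) ^ σ
        ≤ ((msize m).factorial : ℝ) * (n.factorial : ℝ) ^ (σ - 1) := by
      have e1 : ((msize m).factorial : ℝ) ^ σ
          = ((msize m).factorial : ℝ) * ((msize m).factorial : ℝ) ^ (σ - 1) := by
        have h := Real.rpow_add h0 1 (σ - 1)
        rw [Real.rpow_one] at h
        rw [show (1:ℝ) + (σ - 1) = σ by ring] at h
        exact h
      rw [e1]
      gcongr
    calc (mchoose ν m : ℝ) * ((msize m).factorial : ℝ) ^ σ
        ≤ (mchoose ν m : ℝ) * (((msize m).factorial : ℝ) * (n.factorial : ℝ) ^ (σ - 1)) := by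
          gcongr
      _ = ((n.factorial : ℝ)) ^ (σ - 1) * ((mchoose ν m : ℝ) * (msize m).factorial) := by ring
  have step2 : ∑ m ∈ Finset.Iic ν, (mchoose ν m : ℝ) * (msize m).factorial
      = ∑ ℓ ∈ Finset.range (n + 1), (n.choose ℓ : ℝ) * ℓ.factorial := by
    rw [← Finset.sum_fiberwise_of_maps_to (g := fun m => msize m) (t := Finset.range (n+1))
      (fun m hm => Finset.mem_range.mpr (Nat.lt_succ_of_le (msize_mono (Finset.mem_Iic.mp hm))))]
    apply Finset.sum_congr rfl
    intro ℓ _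
    have hcongr : ∀ m ∈ (Finset.Iic ν).filter (fun m => msize m = ℓ),
        (mchoose ν m : ℝ) * (msize m).factorial = (mchoose ν m : ℝ) * ℓ.factorial := by
      intro m hm
      rw [(Finset.mem_filter.mp hm).2]
    rw [Finset.sum_congr rfl hcongr, ← Finset.sum_mul, ← Nat.cast_sum, fiber_eq]
  have step3 : ∑ ℓ ∈ Finset.range (n + 1), (n.choose ℓ : ℝ) * ℓ.factorial
      ≤ Real.exp 1 * n.factorial := by
    have heq : ∀ ℓ ∈ Finset.range (n + 1),
        (n.choose ℓ : ℝ) * ℓ.factorial = (n.factorial : ℝ) / (n - ℓ).factorial := by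
      intro ℓ hℓ
      have hl : ℓ ≤ n := Nat.lt_succ_iff.mp (Finset.mem_range.mp hℓ)
      have h2 : ((n.choose ℓ : ℝ) * ℓ.factorial) * (n - ℓ).factorial = n.factorial := by
        exact_mod_cast Nat.choose_mul_factorial_mul_factorial hl
      have h3 : (0:ℝ) < ((n - ℓ).factorial : ℝ) := by positivity
      rw [eq_div_iff (ne_of_gt h3)]
      linarith [h2]
    rw [Finset.sum_congr rfl heq]
    have hre : ∑ ℓ ∈ Finset.range (n + 1), (n.factorial : ℝ) / (n - ℓ).factorial
        = ∑ j ∈ Finset.range (n + 1), (n.factorial : ℝ) / j.factorial := by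
      refine Finset.sum_nbij' (fun ℓ => n - ℓ) (fun j => n - j) ?_ ?_ ?_ ?_ ?_ <;>
          intro x hx <;>
          simp only [Finset.mem_range, Nat.lt_succ_iff] at * <;>
          first | omega | rfl
    rw [hre]
    have hexp : ∑ j ∈ Finset.range (n + 1), (1:ℝ) / j.factorial ≤ Real.exp 1 := by
      have := Real.sum_le_exp_of_nonneg (x := 1) zero_le_one (n + 1)
      simpa using this
    calc ∑ j ∈ Finset.range (n + 1), (n.factorial : ℝ) / j.factorial
        = (n.factorial : ℝ) * ∑ j ∈ Finset.range (n + 1), (1:ℝ) / j.factorial := by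
          rw [Finset.mul_sum]; apply Finset.sum_congr rfl; intros; ring
      _ ≤ (n.factorial : ℝ) * Real.exp 1 := mul_le_mul_of_nonneg_left hexp hfn.le
      _ = Real.exp 1 * n.factorial := by ring
  have he1 : (1:ℝ) ≤ Real.exp 1 := by linarith [Real.add_one_le_exp 1]
  have hpow : ((n.factorial : ℝ)) ^ (σ - 1) * (n.factorial : ℝ) = (n.factorial : ℝ) ^ σ := by
    have h := Real.rpow_add hfn (σ - 1) 1
    rw [Real.rpow_one] at h
    rw [show σ - 1 + 1 = σ by ring] at h
    exact h.symm
  have hee : Real.exp 1 ≤ Real.exp 1 ^ σ := by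
    calc Real.exp 1 = Real.exp 1 ^ (1:ℝ) := (Real.rpow_one _).symm
      _ ≤ Real.exp 1 ^ σ := Real.rpow_le_rpow_of_exponent_le he1 hσ
  have hfσ : (0:ℝ) ≤ (n.factorial : ℝ) ^ σ := Real.rpow_nonneg hfn.le σ
  calc ∑ m ∈ Finset.Iic ν, (mchoose ν m : ℝ) * ((msize m).factorial : ℝ) ^ σ
      ≤ ((n.factorial : ℝ)) ^ (σ - 1)
          * ∑ m ∈ Finset.Iic ν, (mchoose ν m : ℝ) * (msize m).factorial := step1
    _ ≤ ((n.factorial : ℝ)) ^ (σ - 1) * (Real.exp 1 * n.factorial) := by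
        have hp : (0:ℝ) ≤ ((n.factorial : ℝ)) ^ (σ - 1) := Real.rpow_nonneg hfn.le _
        exact mul_le_mul_of_nonneg_left (step2 ▸ step3) hp
    _ = Real.exp 1 * ((n.factorial : ℝ) ^ (σ - 1) * (n.factorial : ℝ)) := by ring
    _ = Real.exp 1 * (n.factorial : ℝ) ^ σ := by rw [hpow]
    _ ≤ Real.exp 1 ^ σ * (n.factorial : ℝ) ^ σ := mul_le_mul_of_nonneg_right hee hfσ
end
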